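/- With equal parameters λ_i = λ > 0, the Nash equilibrium has the closed form s*_i = m + c (ŝ_i - m), where m = (1/n) Σ_j ŝ_j and c = λ(n-1)/(λ(n-1) + n). -/

import Mathlib

/-- equal-λ closed form `s*_i = m + c (ŝ_i − m)` with
`c = λ(n−1)/(λ(n−1)+n)`. -/
theorem stmt7 (n : ℕ) (hn : 2 ≤ n) (lam : ℝ) (hlam : 0 < lam) (shat sstar : Fin n → ℝ)
    (hsys : ∀ i : Fin n,
      (1 + lam) * sstar i - (∑ j ∈ Finset.univ.erase i, sstar j) / ((n : ℝ) - 1)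
        = lam * shat i) :
    ∀ i : Fin n,
      sstar i = (∑ j, shat j) / n
        + (lam * ((n : ℝ) - 1) / (lam * ((n : ℝ) - 1) + n))
            * (shat i - (∑ j, shat j) / n) := by
  have hn1 : (2:ℝ) ≤ (n:ℝ) := by exact_mod_cast hn
  have hne : (n:ℝ) - 1 ≠ 0 := by linarith
  have hnpos : (0:ℝ) < n := by linarith
  have hD : lam * ((n : ℝ) - 1) + n ≠ 0 := by nlinarith
  have herase : ∀ i : Fin n, (∑ j ∈ Finset.univ.erase i, sstar j)
      = (∑ j, sstar j) - sstar i := fun i =>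
    Finset.sum_erase_eq_sub (Finset.mem_univ i)
  have hsys' : ∀ i : Fin n,
      (1 + lam) * sstar i - ((∑ j, sstar j) - sstar i) / ((n : ℝ) - 1)
        = lam * shat i := by
    intro i; rw [← herase i]; exact hsys i
  have hST : (∑ j, sstar j) = ∑ j, shat j := by
    have h1 : ∑ i : Fin n, ((1 + lam) * sstar i
        - ((∑ j, sstar j) - sstar i) / ((n : ℝ) - 1))
        = ∑ i : Fin n, lam * shat i := Finset.sum_congr rfl fun i _ => hsys' i
    rw [Finset.sum_sub_distrib, ← Finset.mul_sum, ← Finset.sum_div,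
      Finset.sum_sub_distrib, Finset.sum_const, Finset.card_univ,
      Fintype.card_fin, ← Finset.mul_sum] at h1
    rw [nsmul_eq_mul] at h1
    have h2 : ((n:ℝ) * (∑ j, sstar j) - ∑ j, sstar j) / ((n:ℝ) - 1)
        = ∑ j, sstar j := by
      field_simp
    rw [h2] at h1
    have : lam * (∑ j, sstar j) = lam * ∑ j, shat j := by linarith
    exact mul_left_cancel₀ (ne_of_gt hlam) this
  intro i
  have heq := hsys' i
  rw [hST] at heq
  have hne' : (n:ℝ) ≠ 0 := ne_of_gt hnpos
  field_simp at heq ⊢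
  nlinarith [heq, sq_nonneg ((n:ℝ)-1)]
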